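/- Under the hypotheses of the two-sequence stability setting — W ⊆ ℝ^d closed convex, f(·;z) G-Lipschitz and β-smooth for all z, sequences S = (z_1,…,z_m), S' = (z'_1,…,z'_m) with filtration ℱ_{t−1} = (z_1, z'_1,…, z_{t−1}, z'_{t−1}) satisfying Pr(z_t ≠ z'_t | ℱ_{t−1}) ≤ δ for all t ≠ i and E[f(w; z_t) | ℱ_{t−1}] μ-strongly convex in ℱ_{t−1}-measurable w ∈ W, with 0 ≤ δ ≤ μ/(2β) — let w_t and w'_t be the projected gradient descent iterates on S and S' respectively from the same w_1, with step sizes satisfying η_t ≤ μ̃/β² where μ̃ := μ − δβ, and set ω_t := ‖w_t − w'_t‖. Then E ω_{t+1} ≤ (1 − η_t μ̃/2) E ω_t + 2δη_t G for all t ≠ i, and E ω_{i+1} ≤ E ω_i + 2η_i G. -/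

import Mathlib

open scoped Classical


lemma proj_inner_le {d : ℕ} {W : Set (EuclideanSpace ℝ (Fin d))} (hWconv : Convex ℝ W)
    (proj : EuclideanSpace ℝ (Fin d) → EuclideanSpace ℝ (Fin d))
    (hproj : ∀ x, proj x ∈ W ∧ ∀ w ∈ W, ‖x - proj x‖ ≤ ‖x - w‖)
    (u : EuclideanSpace ℝ (Fin d)) {w : EuclideanSpace ℝ (Fin d)} (hw : w ∈ W) :
    (inner ℝ (u - proj u) (w - proj u) : ℝ) ≤ 0 := by
  by_contra hc
  push_neg at hc
  set v := proj u with hv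
  set c : ℝ := inner ℝ (u - v) (w - v) with hcdef
  have hwv : w ≠ v := by
    intro h
    rw [hcdef, h] at hc
    simp at hc
  have hq : (0:ℝ) < ‖w - v‖ ^ 2 := pow_pos (norm_sub_pos_iff.mpr hwv) 2
  set q : ℝ := ‖w - v‖ ^ 2 with hqdef
  set θ : ℝ := min 1 (c / q) with hθdef
  have hθ0 : 0 < θ := lt_min one_pos (div_pos hc hq)
  have hθ1 : θ ≤ 1 := min_le_left _ _
  have hmem : v + θ • (w - v) ∈ W := by
    have h := hWconv (hproj u).1 hw (by linarith : (0:ℝ) ≤ 1 - θ) hθ0.le (by ring)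
    have : (1 - θ) • v + θ • w = v + θ • (w - v) := by
      rw [smul_sub, sub_smul, one_smul]; abel
    rwa [this] at h
  have hle : ‖u - v‖ ≤ ‖(u - v) - θ • (w - v)‖ := by
    have h := (hproj u).2 _ hmem
    have e : u - (v + θ • (w - v)) = (u - v) - θ • (w - v) := by abel
    rwa [e] at h
  have hsq : ‖u - v‖ ^ 2 ≤ ‖(u - v) - θ • (w - v)‖ ^ 2 :=
    pow_le_pow_left₀ (norm_nonneg _) hle 2
  have hexp : ‖(u - v) - θ • (w - v)‖ ^ 2
      = ‖u - v‖ ^ 2 - 2 * (θ * c) + θ ^ 2 * q := by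
    rw [norm_sub_sq_real, real_inner_smul_right, norm_smul, Real.norm_eq_abs, mul_pow, sq_abs,
      hcdef, hqdef]
  rw [hexp] at hsq
  have h2c : 2 * c ≤ θ * q := by
    have h := hsq
    nlinarith [hθ0]
  have hθq : θ * q ≤ c := by
    have : θ ≤ c / q := min_le_right _ _
    calc θ * q ≤ (c / q) * q := by nlinarith
      _ = c := by field_simp
  linarith

lemma proj_nonexpansive {d : ℕ} {W : Set (EuclideanSpace ℝ (Fin d))} (hWconv : Convex ℝ W)
    (proj : EuclideanSpace ℝ (Fin d) → EuclideanSpace ℝ (Fin d))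
    (hproj : ∀ x, proj x ∈ W ∧ ∀ w ∈ W, ‖x - proj x‖ ≤ ‖x - w‖)
    (u v : EuclideanSpace ℝ (Fin d)) : ‖proj u - proj v‖ ≤ ‖u - v‖ := by
  set a := proj u
  set b := proj v
  have h1 : (inner ℝ (u - a) (b - a) : ℝ) ≤ 0 := proj_inner_le hWconv proj hproj u (hproj v).1
  have h2 : (inner ℝ (v - b) (a - b) : ℝ) ≤ 0 := proj_inner_le hWconv proj hproj v (hproj u).1
  rcases eq_or_ne a b with h | h
  · rw [h]; simp [norm_nonneg]
  have key : ‖a - b‖ ^ 2 ≤ (inner ℝ (u - v) (a - b) : ℝ) := by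
    have e : (inner ℝ (u - v) (a - b) : ℝ) - ‖a - b‖ ^ 2
        = -(inner ℝ (u - a) (b - a) : ℝ) - (inner ℝ (v - b) (a - b) : ℝ) := by
      rw [← @real_inner_self_eq_norm_sq]
      simp only [inner_sub_left, inner_sub_right]
      ring
    linarith
  have hib : (inner ℝ (u - v) (a - b) : ℝ) ≤ ‖u - v‖ * ‖a - b‖ := real_inner_le_norm _ _
  have hab : (0:ℝ) < ‖a - b‖ := norm_sub_pos_iff.mpr h
  nlinarith

lemma gradient_weighted_sum {d : ℕ} {ι : Type*} (A : Finset ι) (c : ι → ℝ)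
    (g : ι → EuclideanSpace ℝ (Fin d) → ℝ) (hg : ∀ i, Differentiable ℝ (g i))
    (x : EuclideanSpace ℝ (Fin d)) :
    HasGradientAt (fun w => ∑ i ∈ A, c i * g i w)
      (∑ i ∈ A, c i • gradient (g i) x) x := by
  rw [hasGradientAt_iff_hasFDerivAt]
  have hd : ((InnerProductSpace.toDual ℝ (EuclideanSpace ℝ (Fin d)))
        (∑ i ∈ A, c i • gradient (g i) x))
      = ∑ i ∈ A, c i • (InnerProductSpace.toDual ℝ (EuclideanSpace ℝ (Fin d)))
          (gradient (g i) x) := by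
    rw [map_sum]
    simp only [map_smul]
  rw [hd]
  refine HasFDerivAt.fun_sum (fun i _ => ?_)
  have h2 : (InnerProductSpace.toDual ℝ (EuclideanSpace ℝ (Fin d))) (gradient (g i) x)
      = fderiv ℝ (g i) x := by
    simp [gradient, LinearIsometryEquiv.apply_symm_apply]
  rw [h2]
  exact ((hg i x).hasFDerivAt).const_mul (c i)

/-- `F` is `μ`-strongly convex on `W` (via its gradient). -/
def StrongConvexOnSet {d : ℕ} (W : Set (EuclideanSpace ℝ (Fin d))) (μ : ℝ)
    (F : EuclideanSpace ℝ (Fin d) → ℝ) : Prop :=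
  ∀ x ∈ W, ∀ y ∈ W,
    F x + (inner ℝ (gradient F x) (y - x) : ℝ) + μ / 2 * ‖y - x‖ ^ 2 ≤ F y

set_option maxHeartbeats 1000000 in
/-- The one-round per-atom contraction estimate for coupled projected gradient descent. -/
lemma atom_bound {d : ℕ} {Ω Z : Type*} [Fintype Ω]
    (p : Ω → ℝ) (hp0 : ∀ ω, 0 ≤ p ω)
    (W : Set (EuclideanSpace ℝ (Fin d))) (hWconv : Convex ℝ W)
    (proj : EuclideanSpace ℝ (Fin d) → EuclideanSpace ℝ (Fin d))
    (hproj : ∀ x, proj x ∈ W ∧ ∀ w ∈ W, ‖x - proj x‖ ≤ ‖x - w‖)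
    (f : EuclideanSpace ℝ (Fin d) → Z → ℝ)
    (G β μ δ η0 : ℝ) (hG : 0 < G) (hβ : 0 < β) (hμ : 0 < μ) (hδ0 : 0 ≤ δ)
    (hdiff : ∀ z, Differentiable ℝ (fun w => f w z))
    (hLip : ∀ z, ∀ w ∈ W, ‖gradient (fun u => f u z) w‖ ≤ G)
    (hsmooth : ∀ z, ∀ x ∈ W, ∀ y ∈ W,
      ‖gradient (fun u => f u z) x - gradient (fun u => f u z) y‖ ≤ β * ‖x - y‖)
    (ζ ζ' : Ω → Z) (u u' v v' : Ω → EuclideanSpace ℝ (Fin d))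
    (x y : EuclideanSpace ℝ (Fin d)) (hxW : x ∈ W) (hyW : y ∈ W)
    (A A₂ B : Finset Ω) (hAeq : A₂ = A)
    (hv : ∀ ω' ∈ A, v ω' = x ∧ v' ω' = y)
    (hu : ∀ ω' ∈ A, u ω' = proj (x - η0 • gradient (fun q => f q (ζ ω')) x)
        ∧ u' ω' = proj (y - η0 • gradient (fun q => f q (ζ' ω')) y))
    (hmemB : ∀ ω', ω' ∈ B ↔ (ω' ∈ A ∧ ζ ω' ≠ ζ' ω'))
    (hdis : ∑ ω' ∈ B, p ω' ≤ δ * ∑ ω' ∈ A₂, p ω')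
    (hSC : 0 < (∑ ω' ∈ A₂, p ω') →
        StrongConvexOnSet W μ
          (fun q => (∑ ω' ∈ A₂, p ω' * f q (ζ ω')) / ∑ ω' ∈ A₂, p ω'))
    (hη : 0 ≤ η0) (hηβ2 : η0 * β ^ 2 ≤ μ - δ * β) :
    ∑ ω' ∈ A, p ω' * ‖u ω' - u' ω'‖
      ≤ (1 - η0 * (μ - δ * β) / 2) * ∑ ω' ∈ A, p ω' * ‖v ω' - v' ω'‖
        + 2 * δ * η0 * G * ∑ ω' ∈ A, p ω' := by
  subst hAeq
  have hne : ∀ a b, ‖proj a - proj b‖ ≤ ‖a - b‖ := proj_nonexpansive hWconv proj hproj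
  have hP0 : 0 ≤ ∑ ω' ∈ A₂, p ω' := Finset.sum_nonneg (fun ω' _ => hp0 ω')
  rcases eq_or_lt_of_le hP0 with hP | hP
  · -- zero-probability atom: everything vanishes
    have hz0 : ∀ ω' ∈ A₂, p ω' = 0 :=
      (Finset.sum_eq_zero_iff_of_nonneg (fun ω' _ => hp0 ω')).1 hP.symm
    have e1 : ∑ ω' ∈ A₂, p ω' * ‖u ω' - u' ω'‖ = 0 :=
      Finset.sum_eq_zero (fun ω' h => by rw [hz0 ω' h, zero_mul])
    have e2 : ∑ ω' ∈ A₂, p ω' * ‖v ω' - v' ω'‖ = 0 :=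
      Finset.sum_eq_zero (fun ω' h => by rw [hz0 ω' h, zero_mul])
    rw [e1, e2, ← hP]
    linarith
  · -- positive-probability atom
    set g : Ω → EuclideanSpace ℝ (Fin d) := fun ω' =>
      gradient (fun q => f q (ζ ω')) x - gradient (fun q => f q (ζ ω')) y with hgdef
    have hgn : ∀ ω', ‖g ω'‖ ≤ β * ‖x - y‖ := fun ω' => hsmooth (ζ ω') x hxW y hyW
    -- pointwise bound after one step
    have hpoint : ∀ ω' ∈ A₂, p ω' * ‖u ω' - u' ω'‖
        ≤ p ω' * ‖x - y - η0 • g ω'‖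
          + (if ζ ω' ≠ ζ' ω' then p ω' * (2 * η0 * G) else 0) := by
      intro ω' hωA
      rw [(hu ω' hωA).1, (hu ω' hωA).2]
      by_cases hzz : ζ ω' = ζ' ω'
      · rw [if_neg (not_not_intro hzz), add_zero]
        refine mul_le_mul_of_nonneg_left ?_ (hp0 ω')
        calc ‖proj (x - η0 • gradient (fun q => f q (ζ ω')) x)
              - proj (y - η0 • gradient (fun q => f q (ζ' ω')) y)‖
            ≤ ‖(x - η0 • gradient (fun q => f q (ζ ω')) x)
              - (y - η0 • gradient (fun q => f q (ζ' ω')) y)‖ := hne _ _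
          _ = ‖x - y - η0 • g ω'‖ := by
              rw [← hzz]
              congr 1
              simp only [hgdef, smul_sub]
              module
      · rw [if_pos hzz]
        have hd : (x - η0 • gradient (fun q => f q (ζ ω')) x)
            - (y - η0 • gradient (fun q => f q (ζ' ω')) y)
            = (x - y - η0 • g ω')
              + η0 • (gradient (fun q => f q (ζ' ω')) y
                  - gradient (fun q => f q (ζ ω')) y) := by
          simp only [hgdef, smul_sub]
          module
        have hbd : ‖gradient (fun q => f q (ζ' ω')) y
            - gradient (fun q => f q (ζ ω')) y‖ ≤ 2 * G := by
          calc ‖gradient (fun q => f q (ζ' ω')) y - gradient (fun q => f q (ζ ω')) y‖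
              ≤ ‖gradient (fun q => f q (ζ' ω')) y‖
                + ‖gradient (fun q => f q (ζ ω')) y‖ := norm_sub_le _ _
            _ ≤ G + G := add_le_add (hLip _ _ hyW) (hLip _ _ hyW)
            _ = 2 * G := by ring
        calc p ω' * ‖proj (x - η0 • gradient (fun q => f q (ζ ω')) x)
              - proj (y - η0 • gradient (fun q => f q (ζ' ω')) y)‖
            ≤ p ω' * ‖(x - η0 • gradient (fun q => f q (ζ ω')) x)
              - (y - η0 • gradient (fun q => f q (ζ' ω')) y)‖ :=
              mul_le_mul_of_nonneg_left (hne _ _) (hp0 ω')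
          _ ≤ p ω' * (‖x - y - η0 • g ω'‖ + 2 * η0 * G) := by
              refine mul_le_mul_of_nonneg_left ?_ (hp0 ω')
              rw [hd]
              refine (norm_add_le _ _).trans ?_
              refine add_le_add (le_refl _) ?_
              rw [norm_smul, Real.norm_eq_abs, abs_of_nonneg hη]
              nlinarith
          _ = p ω' * ‖x - y - η0 • g ω'‖ + p ω' * (2 * η0 * G) := by ring
    -- sum the pointwise bound
    have hsum1 : ∑ ω' ∈ A₂, p ω' * ‖u ω' - u' ω'‖
        ≤ (∑ ω' ∈ A₂, p ω' * ‖x - y - η0 • g ω'‖)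
          + ∑ ω' ∈ A₂, (if ζ ω' ≠ ζ' ω' then p ω' * (2 * η0 * G) else 0) := by
      rw [← Finset.sum_add_distrib]
      exact Finset.sum_le_sum hpoint
    -- the disagreement term
    have hsum2 : (∑ ω' ∈ A₂, (if ζ ω' ≠ ζ' ω' then p ω' * (2 * η0 * G) else 0))
        ≤ δ * (∑ ω' ∈ A₂, p ω') * (2 * η0 * G) := by
      rw [← Finset.sum_filter, ← Finset.sum_mul]
      have hBA : A₂.filter (fun ω' => ζ ω' ≠ ζ' ω') = B := by
        ext ω''
        rw [Finset.mem_filter, hmemB]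
      rw [hBA]
      have h2 : (0:ℝ) ≤ 2 * η0 * G := by positivity
      calc (∑ ω' ∈ B, p ω') * (2 * η0 * G)
          ≤ (δ * ∑ ω' ∈ A₂, p ω') * (2 * η0 * G) := mul_le_mul_of_nonneg_right hdis h2
        _ = δ * (∑ ω' ∈ A₂, p ω') * (2 * η0 * G) := by ring
    -- the contraction term
    have hMain : ∑ ω' ∈ A₂, p ω' * ‖x - y - η0 • g ω'‖
        ≤ (1 - η0 * (μ - δ * β) / 2) * (‖x - y‖ * ∑ ω' ∈ A₂, p ω') := by
      rcases eq_or_lt_of_le (norm_nonneg (x - y)) with hr | hr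
      · -- the two iterates coincide on this atom
        have hxy : x = y := by
          have h := hr.symm
          rwa [norm_eq_zero, sub_eq_zero] at h
        subst hxy
        have hzero : ∀ ω' ∈ A₂, p ω' * ‖x - x - η0 • g ω'‖ = 0 := by
          intro ω' _
          simp [hgdef]
        rw [Finset.sum_eq_zero hzero]
        simp
      · -- genuinely separated iterates
        -- strong convexity of the conditional expectation
        have hSCge : μ * ((∑ ω' ∈ A₂, p ω') * ‖x - y‖ ^ 2)
            ≤ ∑ ω' ∈ A₂, p ω' * (inner ℝ (g ω') (x - y) : ℝ) := by
          have hSC2 := hSC hP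
          have hFrw : (fun q => (∑ ω' ∈ A₂, p ω' * f q (ζ ω')) / ∑ ω' ∈ A₂, p ω')
              = fun q => ∑ ω' ∈ A₂, (p ω' / ∑ ω'' ∈ A₂, p ω'') * f q (ζ ω') := by
            funext q
            rw [Finset.sum_div]
            exact Finset.sum_congr rfl (fun ω' _ => by ring)
          have hGrad : ∀ q,
              gradient (fun q' => (∑ ω' ∈ A₂, p ω' * f q' (ζ ω')) / ∑ ω' ∈ A₂, p ω') q
              = ∑ ω' ∈ A₂, (p ω' / ∑ ω'' ∈ A₂, p ω'') • gradient (fun q' => f q' (ζ ω')) q := by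
            intro q
            rw [hFrw]
            exact (gradient_weighted_sum A₂ _ _ (fun ω' => hdiff (ζ ω')) q).gradient
          have hinner : ∀ q e, (inner ℝ (gradient
                (fun q' => (∑ ω' ∈ A₂, p ω' * f q' (ζ ω')) / ∑ ω' ∈ A₂, p ω') q) e : ℝ)
              = (∑ ω' ∈ A₂, p ω' * (inner ℝ (gradient (fun q' => f q' (ζ ω')) q) e : ℝ))
                  / ∑ ω' ∈ A₂, p ω' := by
            intro q e
            rw [hGrad q, sum_inner, Finset.sum_div]
            exact Finset.sum_congr rfl (fun ω' _ => by rw [real_inner_smul_left]; ring)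
          have h1 := hSC2 x hxW y hyW
          have h2 := hSC2 y hyW x hxW
          rw [hinner] at h1 h2
          rw [norm_sub_rev y x] at h1
          set T1 := ∑ ω' ∈ A₂, p ω' * (inner ℝ (gradient (fun q' => f q' (ζ ω')) x) (x - y) : ℝ)
            with hT1
          set T2 := ∑ ω' ∈ A₂, p ω' * (inner ℝ (gradient (fun q' => f q' (ζ ω')) y) (x - y) : ℝ)
            with hT2
          have e1 : ∑ ω' ∈ A₂, p ω' * (inner ℝ (gradient (fun q' => f q' (ζ ω')) x) (y - x) : ℝ)
              = - T1 := by
            rw [hT1, ← Finset.sum_neg_distrib]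
            refine Finset.sum_congr rfl (fun ω' _ => ?_)
            rw [← neg_sub x y, inner_neg_right]
            ring
          have e3 : ∑ ω' ∈ A₂, p ω' * (inner ℝ (g ω') (x - y) : ℝ) = T1 - T2 := by
            rw [hT1, hT2, ← Finset.sum_sub_distrib]
            refine Finset.sum_congr rfl (fun ω' _ => ?_)
            simp only [hgdef, inner_sub_left]
            ring
          rw [e1] at h1
          have h3 : -T1 / (∑ ω' ∈ A₂, p ω') + T2 / (∑ ω' ∈ A₂, p ω')
              ≤ -(μ * ‖x - y‖ ^ 2) := by linarith
          rw [← add_div] at h3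
          have h4 : -T1 + T2 ≤ -(μ * ‖x - y‖ ^ 2) * ∑ ω' ∈ A₂, p ω' := (div_le_iff₀ hP).1 h3
          rw [e3]
          nlinarith [h4]
        -- smoothness upper bound, giving μ ≤ β
        have hSCle : ∑ ω' ∈ A₂, p ω' * (inner ℝ (g ω') (x - y) : ℝ)
            ≤ β * ((∑ ω' ∈ A₂, p ω') * ‖x - y‖ ^ 2) := by
          have hpt2 : ∀ ω' ∈ A₂, p ω' * (inner ℝ (g ω') (x - y) : ℝ)
              ≤ p ω' * (β * ‖x - y‖ ^ 2) := by
            intro ω' _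
            refine mul_le_mul_of_nonneg_left ?_ (hp0 ω')
            calc (inner ℝ (g ω') (x - y) : ℝ) ≤ ‖g ω'‖ * ‖x - y‖ := real_inner_le_norm _ _
              _ ≤ (β * ‖x - y‖) * ‖x - y‖ :=
                  mul_le_mul_of_nonneg_right (hgn ω') (norm_nonneg _)
              _ = β * ‖x - y‖ ^ 2 := by ring
          calc ∑ ω' ∈ A₂, p ω' * (inner ℝ (g ω') (x - y) : ℝ)
              ≤ ∑ ω' ∈ A₂, p ω' * (β * ‖x - y‖ ^ 2) := Finset.sum_le_sum hpt2
            _ = (∑ ω' ∈ A₂, p ω') * (β * ‖x - y‖ ^ 2) := by rw [Finset.sum_mul]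
            _ = β * ((∑ ω' ∈ A₂, p ω') * ‖x - y‖ ^ 2) := by ring
        have hμβ : μ ≤ β := by nlinarith [hSCge, hSCle, mul_pos hP (pow_pos hr 2)]
        -- second-moment expansion
        have hXexp : ∀ ω' : Ω, ‖x - y - η0 • g ω'‖ ^ 2
            = ‖x - y‖ ^ 2 - 2 * η0 * (inner ℝ (g ω') (x - y) : ℝ) + η0 ^ 2 * ‖g ω'‖ ^ 2 := by
          intro ω'
          rw [norm_sub_sq_real, real_inner_smul_right, norm_smul, Real.norm_eq_abs, mul_pow,
            sq_abs, real_inner_comm]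
          ring
        have hgsq : ∑ ω' ∈ A₂, p ω' * ‖g ω'‖ ^ 2
            ≤ (∑ ω' ∈ A₂, p ω') * (β ^ 2 * ‖x - y‖ ^ 2) := by
          have hptg : ∀ ω' ∈ A₂, p ω' * ‖g ω'‖ ^ 2 ≤ p ω' * (β ^ 2 * ‖x - y‖ ^ 2) := by
            intro ω' _
            refine mul_le_mul_of_nonneg_left ?_ (hp0 ω')
            calc ‖g ω'‖ ^ 2 ≤ (β * ‖x - y‖) ^ 2 :=
                pow_le_pow_left₀ (norm_nonneg _) (hgn ω') 2
              _ = β ^ 2 * ‖x - y‖ ^ 2 := by ring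
          calc ∑ ω' ∈ A₂, p ω' * ‖g ω'‖ ^ 2
              ≤ ∑ ω' ∈ A₂, p ω' * (β ^ 2 * ‖x - y‖ ^ 2) := Finset.sum_le_sum hptg
            _ = (∑ ω' ∈ A₂, p ω') * (β ^ 2 * ‖x - y‖ ^ 2) := by rw [Finset.sum_mul]
        have hC : ∑ ω' ∈ A₂, p ω' * ‖x - y - η0 • g ω'‖ ^ 2
            ≤ ((∑ ω' ∈ A₂, p ω') * ‖x - y‖ ^ 2) * (1 - 2 * η0 * μ + η0 ^ 2 * β ^ 2) := by
          have hc : ∀ ω' ∈ A₂, p ω' * ‖x - y - η0 • g ω'‖ ^ 2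
              = p ω' * ‖x - y‖ ^ 2 - 2 * η0 * (p ω' * (inner ℝ (g ω') (x - y) : ℝ))
                  + η0 ^ 2 * (p ω' * ‖g ω'‖ ^ 2) := by
            intro ω' _
            rw [hXexp ω']
            ring
          have hsplit : ∑ ω' ∈ A₂, p ω' * ‖x - y - η0 • g ω'‖ ^ 2
              = (∑ ω' ∈ A₂, p ω') * ‖x - y‖ ^ 2
                  - 2 * η0 * ∑ ω' ∈ A₂, p ω' * (inner ℝ (g ω') (x - y) : ℝ)
                  + η0 ^ 2 * ∑ ω' ∈ A₂, p ω' * ‖g ω'‖ ^ 2 := by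
            rw [Finset.sum_congr rfl hc, Finset.sum_add_distrib, Finset.sum_sub_distrib,
              ← Finset.mul_sum, ← Finset.mul_sum, Finset.sum_mul]
          rw [hsplit]
          have k1 : 2 * η0 * (μ * ((∑ ω' ∈ A₂, p ω') * ‖x - y‖ ^ 2))
              ≤ 2 * η0 * ∑ ω' ∈ A₂, p ω' * (inner ℝ (g ω') (x - y) : ℝ) :=
            mul_le_mul_of_nonneg_left hSCge (by positivity)
          have k2 : η0 ^ 2 * ∑ ω' ∈ A₂, p ω' * ‖g ω'‖ ^ 2
              ≤ η0 ^ 2 * ((∑ ω' ∈ A₂, p ω') * (β ^ 2 * ‖x - y‖ ^ 2)) :=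
            mul_le_mul_of_nonneg_left hgsq (sq_nonneg η0)
          nlinarith [k1, k2]
        -- Cauchy–Schwarz
        have hCS : (∑ ω' ∈ A₂, p ω' * ‖x - y - η0 • g ω'‖) ^ 2
            ≤ (∑ ω' ∈ A₂, p ω') * ∑ ω' ∈ A₂, p ω' * ‖x - y - η0 • g ω'‖ ^ 2 := by
          have h := Finset.sum_mul_sq_le_sq_mul_sq A₂ (fun ω' => Real.sqrt (p ω'))
            (fun ω' => Real.sqrt (p ω') * ‖x - y - η0 • g ω'‖)
          have e1 : ∀ ω' ∈ A₂, Real.sqrt (p ω') * (Real.sqrt (p ω') * ‖x - y - η0 • g ω'‖)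
              = p ω' * ‖x - y - η0 • g ω'‖ := fun ω' _ => by
            rw [← mul_assoc, Real.mul_self_sqrt (hp0 ω')]
          have e2 : ∀ ω' ∈ A₂, Real.sqrt (p ω') ^ 2 = p ω' := fun ω' _ => Real.sq_sqrt (hp0 ω')
          have e3 : ∀ ω' ∈ A₂, (Real.sqrt (p ω') * ‖x - y - η0 • g ω'‖) ^ 2
              = p ω' * ‖x - y - η0 • g ω'‖ ^ 2 := fun ω' _ => by
            rw [mul_pow, Real.sq_sqrt (hp0 ω')]
          rw [Finset.sum_congr rfl e1, Finset.sum_congr rfl e2, Finset.sum_congr rfl e3] at h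
          exact h
        -- the step size is small
        have hηβ : η0 * β ≤ 1 := by
          by_contra hcon
          push_neg at hcon
          nlinarith [hηβ2, hβ, hδ0, mul_nonneg hδ0 hβ.le]
        have hημ1 : η0 * μ ≤ 1 := le_trans (mul_le_mul_of_nonneg_left hμβ hη) hηβ
        have hb0 : 0 ≤ 1 - η0 * μ / 2 := by linarith
        have hsq2 : 1 - 2 * η0 * μ + η0 ^ 2 * β ^ 2 ≤ (1 - η0 * μ / 2) ^ 2 := by
          nlinarith [mul_le_mul_of_nonneg_left hηβ2 hη, sq_nonneg (η0 * μ),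
            mul_nonneg hη (mul_nonneg hδ0 hβ.le)]
        have ha0 : 0 ≤ ∑ ω' ∈ A₂, p ω' * ‖x - y - η0 • g ω'‖ :=
          Finset.sum_nonneg fun ω' _ => mul_nonneg (hp0 ω') (norm_nonneg _)
        have hnn : (0:ℝ) ≤ (∑ ω' ∈ A₂, p ω') ^ 2 * ‖x - y‖ ^ 2 := by positivity
        have hchain : (∑ ω' ∈ A₂, p ω' * ‖x - y - η0 • g ω'‖) ^ 2
            ≤ ((1 - η0 * μ / 2) * (‖x - y‖ * ∑ ω' ∈ A₂, p ω')) ^ 2 := by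
          calc (∑ ω' ∈ A₂, p ω' * ‖x - y - η0 • g ω'‖) ^ 2
              ≤ (∑ ω' ∈ A₂, p ω') * ∑ ω' ∈ A₂, p ω' * ‖x - y - η0 • g ω'‖ ^ 2 := hCS
            _ ≤ (∑ ω' ∈ A₂, p ω')
                * (((∑ ω' ∈ A₂, p ω') * ‖x - y‖ ^ 2) * (1 - 2 * η0 * μ + η0 ^ 2 * β ^ 2)) :=
                mul_le_mul_of_nonneg_left hC hP0
            _ = ((∑ ω' ∈ A₂, p ω') ^ 2 * ‖x - y‖ ^ 2)
                * (1 - 2 * η0 * μ + η0 ^ 2 * β ^ 2) := by ring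
            _ ≤ ((∑ ω' ∈ A₂, p ω') ^ 2 * ‖x - y‖ ^ 2) * (1 - η0 * μ / 2) ^ 2 :=
                mul_le_mul_of_nonneg_left hsq2 hnn
            _ = ((1 - η0 * μ / 2) * (‖x - y‖ * ∑ ω' ∈ A₂, p ω')) ^ 2 := by ring
        have hfin : ∑ ω' ∈ A₂, p ω' * ‖x - y - η0 • g ω'‖
            ≤ (1 - η0 * μ / 2) * (‖x - y‖ * ∑ ω' ∈ A₂, p ω') := by
          have hb : 0 ≤ (1 - η0 * μ / 2) * (‖x - y‖ * ∑ ω' ∈ A₂, p ω') :=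
            mul_nonneg hb0 (mul_nonneg (norm_nonneg _) hP0)
          have h := Real.sqrt_le_sqrt hchain
          rwa [Real.sqrt_sq ha0, Real.sqrt_sq hb] at h
        have hc2 : 1 - η0 * μ / 2 ≤ 1 - η0 * (μ - δ * β) / 2 := by
          nlinarith [mul_nonneg hη (mul_nonneg hδ0 hβ.le)]
        calc ∑ ω' ∈ A₂, p ω' * ‖x - y - η0 • g ω'‖
            ≤ (1 - η0 * μ / 2) * (‖x - y‖ * ∑ ω' ∈ A₂, p ω') := hfin
          _ ≤ (1 - η0 * (μ - δ * β) / 2) * (‖x - y‖ * ∑ ω' ∈ A₂, p ω') :=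
              mul_le_mul_of_nonneg_right hc2 (mul_nonneg (norm_nonneg _) hP0)
    -- put things together
    have hconstsum : ∑ ω' ∈ A₂, p ω' * ‖v ω' - v' ω'‖ = ‖x - y‖ * ∑ ω' ∈ A₂, p ω' := by
      rw [Finset.mul_sum]
      refine Finset.sum_congr rfl (fun ω' h => ?_)
      rw [(hv ω' h).1, (hv ω' h).2]
      ring
    calc ∑ ω' ∈ A₂, p ω' * ‖u ω' - u' ω'‖
        ≤ (∑ ω' ∈ A₂, p ω' * ‖x - y - η0 • g ω'‖)
          + ∑ ω' ∈ A₂, (if ζ ω' ≠ ζ' ω' then p ω' * (2 * η0 * G) else 0) := hsum1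
      _ ≤ (1 - η0 * (μ - δ * β) / 2) * (‖x - y‖ * ∑ ω' ∈ A₂, p ω')
          + δ * (∑ ω' ∈ A₂, p ω') * (2 * η0 * G) := add_le_add hMain hsum2
      _ = (1 - η0 * (μ - δ * β) / 2) * ∑ ω' ∈ A₂, p ω' * ‖v ω' - v' ω'‖
          + 2 * δ * η0 * G * ∑ ω' ∈ A₂, p ω' := by
          rw [hconstsum]
          ring

/-- (Lemma A.1, the recursion lemma.)  Under the coupled two-sequence
assumptions, the expected distance `ω_t = E‖w_t - w'_t‖` between the projected gradient
descent iterates satisfies `E ω_{t+1} ≤ (1 - η_t μ̃ / 2) E ω_t + 2δ η_t G` for all rounds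
`t ≠ i`, and `E ω_{i+1} ≤ E ω_i + 2 η_i G`, where `μ̃ = μ - δβ` and `η_t ≤ μ̃/β²`.
Randomness is modelled by a finite probability space `(Ω, p)`; conditioning on the
filtration `ℱ_{t-1}` is expressed by summing over sample points with the same history. -/
theorem gd_stability_recursion
    {d : ℕ} {Ω Z : Type*} [Fintype Ω] [DecidableEq Z]
    (p : Ω → ℝ) (hp0 : ∀ ω, 0 ≤ p ω) (hp1 : ∑ ω, p ω = 1)
    (W : Set (EuclideanSpace ℝ (Fin d))) (hWconv : Convex ℝ W) (hWclosed : IsClosed W)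
    (proj : EuclideanSpace ℝ (Fin d) → EuclideanSpace ℝ (Fin d))
    (hproj : ∀ x, proj x ∈ W ∧ ∀ w ∈ W, ‖x - proj x‖ ≤ ‖x - w‖)
    (f : EuclideanSpace ℝ (Fin d) → Z → ℝ)
    (G β μ δ : ℝ) (hG : 0 < G) (hβ : 0 < β) (hμ : 0 < μ)
    (hδ0 : 0 ≤ δ) (hδ : δ ≤ μ / (2 * β))
    (hdiff : ∀ z, Differentiable ℝ (fun w => f w z))
    (hLip : ∀ z, ∀ w ∈ W, ‖gradient (fun u => f u z) w‖ ≤ G)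
    (hsmooth : ∀ z, ∀ x ∈ W, ∀ y ∈ W,
      ‖gradient (fun u => f u z) x - gradient (fun u => f u z) y‖ ≤ β * ‖x - y‖)
    (m i : ℕ) (hi1 : 1 ≤ i) (him : i ≤ m)
    (z z' : ℕ → Ω → Z)
    -- condition (i): `Pr(z_t ≠ z'_t ∣ ℱ_{t-1}) ≤ δ` for all `t ≠ i`
    (hcond1 : ∀ t, 1 ≤ t → t ≤ m → t ≠ i → ∀ ω : Ω,
      (∑ ω' ∈ Finset.univ.filter (fun ω' =>
            (∀ s ∈ Finset.Icc 1 (t - 1), z s ω' = z s ω ∧ z' s ω' = z' s ω) ∧ z t ω' ≠ z' t ω'),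
          p ω')
        ≤ δ * ∑ ω' ∈ Finset.univ.filter (fun ω' =>
            ∀ s ∈ Finset.Icc 1 (t - 1), z s ω' = z s ω ∧ z' s ω' = z' s ω), p ω')
    -- condition (ii): `E[f(w; z_t) ∣ ℱ_{t-1}]` is `μ`-strongly convex on `W`
    (hcond2 : ∀ t, 1 ≤ t → t ≤ m → ∀ ω : Ω,
      0 < (∑ ω' ∈ Finset.univ.filter (fun ω' =>
            ∀ s ∈ Finset.Icc 1 (t - 1), z s ω' = z s ω ∧ z' s ω' = z' s ω), p ω') →
      StrongConvexOnSet W μ (fun w =>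
        (∑ ω' ∈ Finset.univ.filter (fun ω' =>
            ∀ s ∈ Finset.Icc 1 (t - 1), z s ω' = z s ω ∧ z' s ω' = z' s ω), p ω' * f w (z t ω'))
        / (∑ ω' ∈ Finset.univ.filter (fun ω' =>
            ∀ s ∈ Finset.Icc 1 (t - 1), z s ω' = z s ω ∧ z' s ω' = z' s ω), p ω')))
    -- step sizes: only `0 ≤ η_t ≤ μ̃ / β²` is required
    (η : ℕ → ℝ) (hη0 : ∀ t, 0 ≤ η t) (hηb : ∀ t, η t ≤ (μ - δ * β) / β ^ 2)
    -- the coupled projected gradient descent iterates, from the same initialization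
    (w1 : EuclideanSpace ℝ (Fin d)) (hw1 : w1 ∈ W)
    (w w' : ℕ → Ω → EuclideanSpace ℝ (Fin d))
    (hinit : ∀ ω, w 1 ω = w1 ∧ w' 1 ω = w1)
    (hstep : ∀ t, 1 ≤ t → t ≤ m → ∀ ω,
      w (t + 1) ω = proj (w t ω - η t • gradient (fun u => f u (z t ω)) (w t ω)) ∧
      w' (t + 1) ω = proj (w' t ω - η t • gradient (fun u => f u (z' t ω)) (w' t ω))) :
    (∀ t, 1 ≤ t → t ≤ m → t ≠ i →
      ∑ ω, p ω * ‖w (t + 1) ω - w' (t + 1) ω‖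
        ≤ (1 - η t * (μ - δ * β) / 2) * ∑ ω, p ω * ‖w t ω - w' t ω‖ + 2 * δ * η t * G)
    ∧ ∑ ω, p ω * ‖w (i + 1) ω - w' (i + 1) ω‖
        ≤ (∑ ω, p ω * ‖w i ω - w' i ω‖) + 2 * η i * G := by
  have hne : ∀ u v, ‖proj u - proj v‖ ≤ ‖u - v‖ := proj_nonexpansive hWconv proj hproj
  -- iterates remain in W
  have hmemW : ∀ t, 1 ≤ t → t ≤ m + 1 → ∀ ω, w t ω ∈ W ∧ w' t ω ∈ W := by
    intro t ht1
    induction t, ht1 using Nat.le_induction with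
    | base =>
      intro _ ω
      rw [(hinit ω).1, (hinit ω).2]
      exact ⟨hw1, hw1⟩
    | succ t ht ih =>
      intro htm ω
      have htm' : t ≤ m := by omega
      rw [(hstep t ht htm' ω).1, (hstep t ht htm' ω).2]
      exact ⟨(hproj _).1, (hproj _).1⟩
  -- iterates are measurable w.r.t. the history
  have hconst : ∀ t, 1 ≤ t → t ≤ m + 1 → ∀ ω₀ ω' : Ω,
      (∀ s ∈ Finset.Icc 1 (t - 1), z s ω' = z s ω₀ ∧ z' s ω' = z' s ω₀) →
      w t ω' = w t ω₀ ∧ w' t ω' = w' t ω₀ := by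
    intro t ht1
    induction t, ht1 using Nat.le_induction with
    | base =>
      intro _ ω₀ ω' _
      rw [(hinit ω').1, (hinit ω').2, (hinit ω₀).1, (hinit ω₀).2]
      exact ⟨rfl, rfl⟩
    | succ t ht ih =>
      intro htm ω₀ ω' hist
      rw [Nat.add_sub_cancel] at hist
      have hz : z t ω' = z t ω₀ ∧ z' t ω' = z' t ω₀ :=
        hist t (Finset.mem_Icc.mpr ⟨ht, le_refl t⟩)
      have hprev : ∀ s ∈ Finset.Icc 1 (t - 1), z s ω' = z s ω₀ ∧ z' s ω' = z' s ω₀ := by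
        intro s hs
        rw [Finset.mem_Icc] at hs
        exact hist s (Finset.mem_Icc.mpr ⟨hs.1, by omega⟩)
      have hwt := ih (by omega) ω₀ ω' hprev
      have htm' : t ≤ m := by omega
      rw [(hstep t ht htm' ω').1, (hstep t ht htm' ω').2,
        (hstep t ht htm' ω₀).1, (hstep t ht htm' ω₀).2,
        hwt.1, hwt.2, hz.1, hz.2]
      exact ⟨rfl, rfl⟩
  refine ⟨?_, ?_⟩
  · -- the contraction round, t ≠ i
    intro t ht1 htm hti
    -- decompose the total expectation over the atoms of the filtration
    classical
    set key : Ω → ({s // s ∈ Finset.Icc 1 (t - 1)} → Z × Z) :=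
      fun ω s => (z s.1 ω, z' s.1 ω) with hkeydef
    have hkeyiff : ∀ ω₀ ω' : Ω, key ω' = key ω₀ ↔
        (∀ s ∈ Finset.Icc 1 (t - 1), z s ω' = z s ω₀ ∧ z' s ω' = z' s ω₀) := by
      intro ω₀ ω'
      constructor
      · intro h s hs
        have h2 := congrFun h ⟨s, hs⟩
        exact ⟨congrArg Prod.fst h2, congrArg Prod.snd h2⟩
      · intro h
        funext s
        exact Prod.ext ((h s.1 s.2).1) ((h s.1 s.2).2)
    have hfib : ∀ X : Ω → ℝ, ∑ ω, X ω
        = ∑ k ∈ Finset.univ.image key, ∑ ω ∈ Finset.univ.filter (fun ω => key ω = k), X ω :=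
      fun X => (Finset.sum_fiberwise_of_maps_to
        (fun ω _ => Finset.mem_image_of_mem key (Finset.mem_univ ω)) X).symm
    have hstepk : ∀ k ∈ Finset.univ.image key,
        ∑ ω ∈ Finset.univ.filter (fun ω => key ω = k), p ω * ‖w (t + 1) ω - w' (t + 1) ω‖
          ≤ (1 - η t * (μ - δ * β) / 2) *
              ∑ ω ∈ Finset.univ.filter (fun ω => key ω = k), p ω * ‖w t ω - w' t ω‖
            + 2 * δ * η t * G * ∑ ω ∈ Finset.univ.filter (fun ω => key ω = k), p ω := by
      intro k hk
      obtain ⟨ω₀, -, rfl⟩ := Finset.mem_image.1 hk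
      obtain ⟨hxW, hyW⟩ := hmemW t ht1 (by omega) ω₀
      refine atom_bound p hp0 W hWconv proj hproj f G β μ δ (η t) hG hβ hμ hδ0
        hdiff hLip hsmooth (fun ω' => z t ω') (fun ω' => z' t ω')
        (w (t + 1)) (w' (t + 1)) (w t) (w' t) (w t ω₀) (w' t ω₀) hxW hyW
        _ _ _ ?_ ?_ ?_ ?_ (hcond1 t ht1 htm hti ω₀) (hcond2 t ht1 htm ω₀)
        (hη0 t) ((le_div_iff₀ (by positivity)).1 (hηb t))
      · -- the two descriptions of the atom agree
        ext ω'
        simp only [Finset.mem_filter, Finset.mem_univ, true_and]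
        exact (hkeyiff ω₀ ω').symm
      · -- the iterates are constant on the atom
        intro ω' hω'
        have hhist := (hkeyiff ω₀ ω').1 (Finset.mem_filter.1 hω').2
        exact hconst t ht1 (by omega) ω₀ ω' hhist
      · -- the one-step description on the atom
        intro ω' hω'
        have hhist := (hkeyiff ω₀ ω').1 (Finset.mem_filter.1 hω').2
        have hc := hconst t ht1 (by omega) ω₀ ω' hhist
        have hs := hstep t ht1 htm ω'
        rw [hs.1, hs.2, hc.1, hc.2]
        exact ⟨rfl, rfl⟩
      · -- membership in the disagreement event
        intro ω'
        simp only [Finset.mem_filter, Finset.mem_univ, true_and]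
        constructor
        · rintro ⟨h1, h2⟩
          exact ⟨(hkeyiff ω₀ ω').2 h1, h2⟩
        · rintro ⟨h1, h2⟩
          exact ⟨(hkeyiff ω₀ ω').1 h1, h2⟩
    calc ∑ ω, p ω * ‖w (t + 1) ω - w' (t + 1) ω‖
        = ∑ k ∈ Finset.univ.image key, ∑ ω ∈ Finset.univ.filter (fun ω => key ω = k),
            p ω * ‖w (t + 1) ω - w' (t + 1) ω‖ := hfib _
      _ ≤ ∑ k ∈ Finset.univ.image key,
            ((1 - η t * (μ - δ * β) / 2) *
                ∑ ω ∈ Finset.univ.filter (fun ω => key ω = k), p ω * ‖w t ω - w' t ω‖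
              + 2 * δ * η t * G * ∑ ω ∈ Finset.univ.filter (fun ω => key ω = k), p ω) :=
          Finset.sum_le_sum hstepk
      _ = (1 - η t * (μ - δ * β) / 2) *
            (∑ k ∈ Finset.univ.image key, ∑ ω ∈ Finset.univ.filter (fun ω => key ω = k),
              p ω * ‖w t ω - w' t ω‖)
          + 2 * δ * η t * G *
            (∑ k ∈ Finset.univ.image key, ∑ ω ∈ Finset.univ.filter (fun ω => key ω = k), p ω) := by
          rw [Finset.sum_add_distrib, ← Finset.mul_sum, ← Finset.mul_sum]
      _ = (1 - η t * (μ - δ * β) / 2) * ∑ ω, p ω * ‖w t ω - w' t ω‖ + 2 * δ * η t * G := by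
          rw [← hfib (fun ω => p ω * ‖w t ω - w' t ω‖), ← hfib p, hp1, mul_one]
  · -- the round t = i
    have hpt : ∀ ω, ‖w (i + 1) ω - w' (i + 1) ω‖ ≤ ‖w i ω - w' i ω‖ + 2 * η i * G := by
      intro ω
      obtain ⟨h1, h2⟩ := hstep i hi1 him ω
      obtain ⟨hxW, hyW⟩ := hmemW i hi1 (by omega) ω
      rw [h1, h2]
      set a := gradient (fun u => f u (z i ω)) (w i ω) with ha
      set b := gradient (fun u => f u (z' i ω)) (w' i ω) with hb
      calc ‖proj (w i ω - η i • a) - proj (w' i ω - η i • b)‖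
          ≤ ‖(w i ω - η i • a) - (w' i ω - η i • b)‖ := hne _ _
        _ = ‖(w i ω - w' i ω) - η i • (a - b)‖ := by rw [smul_sub]; congr 1; abel
        _ ≤ ‖w i ω - w' i ω‖ + ‖η i • (a - b)‖ := norm_sub_le _ _
        _ ≤ ‖w i ω - w' i ω‖ + 2 * η i * G := by
            have he : ‖η i • (a - b)‖ = η i * ‖a - b‖ := by
              rw [norm_smul, Real.norm_eq_abs, abs_of_nonneg (hη0 i)]
            have hab : ‖a - b‖ ≤ 2 * G := by
              calc ‖a - b‖ ≤ ‖a‖ + ‖b‖ := norm_sub_le _ _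
                _ ≤ G + G := add_le_add (hLip _ _ hxW) (hLip _ _ hyW)
                _ = 2 * G := by ring
            rw [he]
            nlinarith [hη0 i]
    calc ∑ ω, p ω * ‖w (i + 1) ω - w' (i + 1) ω‖
        ≤ ∑ ω, p ω * (‖w i ω - w' i ω‖ + 2 * η i * G) :=
          Finset.sum_le_sum (fun ω _ => mul_le_mul_of_nonneg_left (hpt ω) (hp0 ω))
      _ = (∑ ω, p ω * ‖w i ω - w' i ω‖) + (∑ ω, p ω) * (2 * η i * G) := by
          rw [Finset.sum_mul, ← Finset.sum_add_distrib]
          exact Finset.sum_congr rfl (fun ω _ => by ring)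
      _ = _ := by rw [hp1]; ring
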